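/- Let n ∈ ℕ₀ and let Hₙ denote the physicists' Hermite polynomial, Hₙ(t) = (−1)ⁿ·e^{t²}·(dⁿ/dtⁿ)(e^{−t²}). Then x(t) = e^{−t²/2}·Hₙ(t) is a nonzero solution of x''(t) = (t² − (2n+1))·x(t), x lies in L²(ℝ), and its derivative satisfies x'(t) = e^{−t²/2}·(2n·H_{n−1}(t) − t·Hₙ(t)) (with the convention H_{−1} = 0). -/

import Mathlib

open MeasureTheory

/-- The physicists' Hermite polynomial (as a function):
`Hₙ(t) = (-1)ⁿ e^{t²} (dⁿ/dtⁿ)(e^{-t²})`. -/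
noncomputable def physHermite (n : ℕ) (t : ℝ) : ℝ :=
  (-1 : ℝ) ^ n * Real.exp (t ^ 2) * iteratedDeriv n (fun s : ℝ => Real.exp (-s ^ 2)) t

open Polynomial

noncomputable def PH : ℕ → Polynomial ℝ
  | 0 => 1
  | n+1 => 2 * X * PH n - derivative (PH n)

lemma deriv_poly_mul_exp (p : Polynomial ℝ) (c t : ℝ) :
    deriv (fun s : ℝ => Polynomial.eval s p * Real.exp (c * s ^ 2)) t
      = (Polynomial.eval t (derivative p) + 2 * c * t * Polynomial.eval t p) *
        Real.exp (c * t ^ 2) := by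
  have h1 : HasDerivAt (fun s : ℝ => Polynomial.eval s p) (Polynomial.eval t (derivative p)) t :=
    p.hasDerivAt t
  have h2 : HasDerivAt (fun s : ℝ => Real.exp (c * s ^ 2)) (2 * c * t * Real.exp (c * t ^ 2)) t := by
    have : HasDerivAt (fun s : ℝ => c * s ^ 2) (2 * c * t) t := by
      have := (hasDerivAt_pow 2 t).const_mul c
      exact this.congr_deriv (by norm_num; ring)
    simpa [mul_comm, mul_assoc, mul_left_comm] using this.exp
  have := (h1.mul h2).deriv
  exact this.trans (by ring)

lemma iteratedDeriv_gauss (n : ℕ) (t : ℝ) :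
    iteratedDeriv n (fun s : ℝ => Real.exp (-s ^ 2)) t
      = (-1 : ℝ) ^ n * Polynomial.eval t (PH n) * Real.exp (-t ^ 2) := by
  induction n generalizing t with
  | zero => simp [PH]
  | succ n ih =>
    rw [iteratedDeriv_succ]
    have hf : (iteratedDeriv n fun s : ℝ => Real.exp (-s ^ 2))
        = fun t => (-1 : ℝ) ^ n * (Polynomial.eval t (PH n) * Real.exp ((-1) * t ^ 2)) := by
      funext s; rw [ih s]; ring_nf
    rw [hf, deriv_const_mul _ (by
      exact ((PH n).differentiable.differentiableAt).mul
        (((differentiable_pow 2).const_mul (-1)).differentiableAt.exp)),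
      deriv_poly_mul_exp]
    show _ = (-1:ℝ)^(n+1) * Polynomial.eval t (2 * X * PH n - derivative (PH n)) * _
    simp only [eval_sub, eval_mul, eval_ofNat, eval_X]
    rw [show ((-1:ℝ) * t ^ 2) = -t^2 by ring]
    ring

lemma physHermite_eq (n : ℕ) (t : ℝ) :
    (-1 : ℝ) ^ n * Real.exp (t ^ 2) * iteratedDeriv n (fun s : ℝ => Real.exp (-s ^ 2)) t
      = Polynomial.eval t (PH n) := by
  rw [iteratedDeriv_gauss]
  rw [show ((-1:ℝ)^n * Real.exp (t^2) * ((-1:ℝ)^n * Polynomial.eval t (PH n) * Real.exp (-t^2)))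
      = ((-1:ℝ)^n)^2 * (Real.exp (t^2) * Real.exp (-t^2)) * Polynomial.eval t (PH n) by ring,
    ← Real.exp_add]
  rw [show ((-1:ℝ)^n)^2 = ((-1:ℝ)^2)^n by rw [← pow_mul, ← pow_mul, mul_comm]]
  norm_num

lemma PH_deriv : ∀ n : ℕ, derivative (PH (n + 1)) = ((2 * (n + 1) : ℕ) : Polynomial ℝ) * PH n := by
  intro n
  induction n with
  | zero =>
    show derivative (2 * X * PH 0 - derivative (PH 0)) = _
    show derivative (2 * X * 1 - derivative (1 : Polynomial ℝ)) = _
    simp [PH]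
  | succ n ih =>
    have hPH : PH (n + 2) = 2 * X * PH (n + 1) - derivative (PH (n + 1)) := rfl
    have hPH2 : PH (n + 1) = 2 * X * PH n - derivative (PH n) := rfl
    rw [show n + 1 + 1 = n + 2 from rfl, hPH, derivative_sub, ih]
    simp only [derivative_mul, derivative_X, derivative_ofNat, derivative_natCast, ih]
    simp only [hPH2]
    push_cast
    ring

lemma PH_deriv' (n : ℕ) :
    derivative (PH n) = ((2 * n : ℕ) : Polynomial ℝ) * PH (n - 1) := by
  cases n with
  | zero => simp [PH]
  | succ m => simpa using PH_deriv m

lemma PH_ode (n : ℕ) :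
    derivative (derivative (PH n)) =
      2 * X * derivative (PH n) - ((2 * n : ℕ) : Polynomial ℝ) * PH n := by
  cases n with
  | zero => simp [PH]
  | succ m =>
    rw [PH_deriv m]
    rw [derivative_mul, derivative_natCast]
    have hPH2 : PH (m + 1) = 2 * X * PH m - derivative (PH m) := rfl
    rw [hPH2]
    ring

lemma PH_coeff (n : ℕ) : (PH n).coeff n = 2 ^ n ∧ (PH n).natDegree ≤ n := by
  induction n with
  | zero => simp [PH]
  | succ n ih =>
    obtain ⟨h1, h2⟩ := ih
    have hPH2 : PH (n + 1) = 2 * X * PH n - derivative (PH n) := rfl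
    have hd : (derivative (PH n)).natDegree ≤ n :=
      le_trans (natDegree_derivative_le _) (by omega)
    constructor
    · rw [hPH2, coeff_sub, mul_assoc, (map_ofNat C 2).symm,
        coeff_C_mul, coeff_X_mul, h1,
        coeff_eq_zero_of_natDegree_lt (lt_of_le_of_lt hd (by omega))]
      ring
    · rw [hPH2]
      refine le_trans (natDegree_sub_le _ _) (max_le ?_ (by omega))
      refine le_trans (natDegree_mul_le) ?_
      have : (2 * X : Polynomial ℝ).natDegree ≤ 1 :=
        le_trans natDegree_mul_le (by simp)
      omega

lemma PH_ne_zero (n : ℕ) : PH n ≠ 0 := by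
  intro h
  have := (PH_coeff n).1
  rw [h] at this
  simp at this
  exact (pow_ne_zero n (two_ne_zero)) this.symm

lemma integrable_poly_mul_gauss (q : Polynomial ℝ) :
    MeasureTheory.Integrable (fun t : ℝ => Polynomial.eval t q * Real.exp (-t ^ 2)) := by
  induction q using Polynomial.induction_on' with
  | add p q hp hq =>
    simp only [eval_add, add_mul]; exact hp.add hq
  | monomial k a =>
    have h : MeasureTheory.Integrable (fun x : ℝ => x ^ (k : ℝ) * Real.exp (-1 * x ^ 2)) :=
      integrable_rpow_mul_exp_neg_mul_sq one_pos (lt_of_lt_of_le neg_one_lt_zero (Nat.cast_nonneg k))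
    have h2 : MeasureTheory.Integrable (fun x : ℝ => x ^ k * Real.exp (-x ^ 2)) := by
      simpa [Real.rpow_natCast] using h
    simpa [eval_monomial, mul_assoc, mul_comm, mul_left_comm] using h2.const_mul a

/-- For each `n ∈ ℕ₀`, `x(t) = e^{-t²/2} Hₙ(t)` is a nonzero
`L²(ℝ)` solution of the Weber equation `x'' = (t² - (2n+1)) x`, with derivative
`x'(t) = e^{-t²/2} (2n H_{n-1}(t) - t Hₙ(t))` (convention `H₋₁ = 0`, here
harmless since the factor `2n` vanishes when `n = 0`). -/
theorem stmt15 (n : ℕ) :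
    (fun t : ℝ => Real.exp (-t ^ 2 / 2) * physHermite n t) ≠ 0 ∧
    (∀ t : ℝ,
      deriv (deriv fun t : ℝ => Real.exp (-t ^ 2 / 2) * physHermite n t) t =
        (t ^ 2 - (2 * (n : ℝ) + 1)) * (Real.exp (-t ^ 2 / 2) * physHermite n t)) ∧
    MeasureTheory.MemLp (fun t : ℝ => Real.exp (-t ^ 2 / 2) * physHermite n t) 2
      MeasureTheory.volume ∧
    (∀ t : ℝ,
      deriv (fun t : ℝ => Real.exp (-t ^ 2 / 2) * physHermite n t) t =
        Real.exp (-t ^ 2 / 2) *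
          (2 * (n : ℝ) * physHermite (n - 1) t - t * physHermite n t)) := by
  have hph : ∀ (m : ℕ) (t : ℝ), physHermite m t = Polynomial.eval t (PH m) := by
    intro m t
    simp only [physHermite]
    exact physHermite_eq m t
  have hfun : (fun t : ℝ => Real.exp (-t ^ 2 / 2) * physHermite n t)
      = fun t : ℝ => Polynomial.eval t (PH n) * Real.exp ((-1 / 2 : ℝ) * t ^ 2) := by
    funext t
    rw [hph, show ((-1 / 2 : ℝ) * t ^ 2) = -t ^ 2 / 2 by ring]
    ring
  have hderiv : ∀ t : ℝ,
      deriv (fun t : ℝ => Real.exp (-t ^ 2 / 2) * physHermite n t) t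
        = Polynomial.eval t (derivative (PH n) - X * PH n) * Real.exp ((-1 / 2 : ℝ) * t ^ 2) := by
    intro t
    rw [hfun, deriv_poly_mul_exp]
    simp only [eval_sub, eval_mul, eval_X]
    ring
  refine ⟨?_, ?_, ?_, ?_⟩
  · intro h
    apply PH_ne_zero n
    have hz : ∀ t : ℝ, Polynomial.eval t (PH n) = Polynomial.eval t (0 : Polynomial ℝ) := by
      intro t
      have := congrFun (hfun.symm.trans h) t
      simp only [Pi.zero_apply] at this
      have he := Real.exp_ne_zero ((-1 / 2 : ℝ) * t ^ 2)
      simpa [he] using mul_eq_zero.mp this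
    exact Polynomial.funext hz
  · intro t
    have hd2 : (deriv fun t : ℝ => Real.exp (-t ^ 2 / 2) * physHermite n t)
        = fun t : ℝ =>
          Polynomial.eval t (derivative (PH n) - X * PH n) * Real.exp ((-1 / 2 : ℝ) * t ^ 2) :=
      funext hderiv
    rw [hd2, deriv_poly_mul_exp, hph]
    simp only [derivative_sub, derivative_mul, derivative_X, PH_ode n, eval_sub, eval_add,
      eval_mul, eval_X, eval_ofNat, eval_natCast, one_mul]
    rw [show ((-1 / 2 : ℝ) * t ^ 2) = -t ^ 2 / 2 by ring]
    push_cast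
    ring
  · rw [hfun]
    have hcont : Continuous fun t : ℝ =>
        Polynomial.eval t (PH n) * Real.exp ((-1 / 2 : ℝ) * t ^ 2) :=
      (PH n).continuous.mul ((continuous_const.mul (continuous_pow 2)).rexp)
    rw [MeasureTheory.memLp_two_iff_integrable_sq hcont.aestronglyMeasurable]
    refine (integrable_poly_mul_gauss (PH n ^ 2)).congr ?_
    refine Filter.Eventually.of_forall fun t => ?_
    simp only [eval_pow, mul_pow, pow_two (Real.exp _), ← Real.exp_add]
    rw [show (-1 / 2 * t ^ 2 + -1 / 2 * t ^ 2 : ℝ) = -t ^ 2 by ring]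
  · intro t
    rw [hderiv t, hph, hph]
    simp only [eval_sub, eval_mul, eval_X, PH_deriv' n, eval_natCast]
    rw [show ((-1 / 2 : ℝ) * t ^ 2) = -t ^ 2 / 2 by ring]
    push_cast
    ring
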